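/- arXiv:0908.1909 — 6 statements merged into one kernel-verified Lean document; each statement's English description precedes it below -/
import Mathlib

section
/- For the density p(x) = b_k exp(-a_k x^{2k}) on ℝ with CDF P, the lower tail bound holds for all x > 0: b_k · (x / (2k a_k x^{2k} + 2k - 1)) · exp(-a_k x^{2k}) ≤ 1 - P(x). -/
open MeasureTheory Set Filter Real

lemma aux_integrable (n : ℕ) (hn : 1 ≤ n) (a : ℝ) (ha : 0 < a) :
    Integrable (fun t : ℝ => Real.exp (-a * t ^ (2 * n))) := by
  have h1 : IntegrableOn (fun t : ℝ => t ^ (0 : ℝ) * Real.exp (-a * t ^ ((2 * n : ℕ) : ℝ)))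
      (Ioi 0) :=
    integrableOn_rpow_mul_exp_neg_mul_rpow (by norm_num) (by exact_mod_cast by omega) ha
  have h2 : IntegrableOn (fun t : ℝ => Real.exp (-a * t ^ (2 * n))) (Ioi 0) := by
    refine h1.congr_fun (fun y hy => ?_) measurableSet_Ioi
    beta_reduce
    rw [Real.rpow_zero, one_mul, Real.rpow_natCast]
  have h3 : IntegrableOn (fun t : ℝ => Real.exp (-a * t ^ (2 * n))) (Iio 0) := by
    rw [← (Measure.measurePreserving_neg (volume : Measure ℝ)).integrableOn_comp_preimage
        (Homeomorph.neg ℝ).measurableEmbedding]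
    simp only [Function.comp_def, neg_preimage, neg_Iio, neg_zero]
    refine h2.congr_fun (fun y hy => ?_) measurableSet_Ioi
    rw [Even.neg_pow ⟨n, by ring⟩]
  rw [← integrableOn_univ, ← Iio_union_Ici (a := (0 : ℝ)), integrableOn_union,
    integrableOn_Ici_iff_integrableOn_Ioi]
  exact ⟨h3, h2⟩

lemma aux_tail (j : ℕ) (a : ℝ) (ha : 0 < a) (x : ℝ) (hx : 0 < x) :
    x / ((2 * j + 2) * a * x ^ (2 * j + 2) + (2 * j + 1)) * Real.exp (-a * x ^ (2 * j + 2))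
      ≤ ∫ t in Set.Ioi x, Real.exp (-a * t ^ (2 * j + 2)) := by
  set m : ℝ := 2 * j + 1 with hm
  have hm1 : (1 : ℝ) ≤ m := by
    have : (0:ℝ) ≤ (j:ℝ) := by positivity
    rw [hm]; linarith
  set φ : ℝ → ℝ := fun t => Real.exp (-a * t ^ (2 * j + 2)) with hφ
  set D : ℝ → ℝ := fun t => (2 * j + 2) * a * t ^ (2 * j + 2) + m with hD
  have hpownn : ∀ t : ℝ, 0 ≤ t ^ (2 * j + 2) := by
    intro t
    rw [show 2 * j + 2 = 2 * (j + 1) by ring, pow_mul]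
    positivity
  have hDm : ∀ t : ℝ, m ≤ D t := by
    intro t
    have h1 := hpownn t
    have : (0:ℝ) ≤ (2 * j + 2) * a * t ^ (2 * j + 2) := by positivity
    simp only [hD]; linarith
  have hDpos : ∀ t : ℝ, 0 < D t := fun t => lt_of_lt_of_le (by linarith) (hDm t)
  set g : ℝ → ℝ := fun t => t / D t * φ t with hg
  set G : ℝ → ℝ := fun t => φ t * ((m + m ^ 2) / (D t) ^ 2 - 1) with hG
  have hφint : Integrable φ := by
    rw [hφ]
    have := aux_integrable (j + 1) (by omega) a ha
    simpa [show 2 * (j + 1) = 2 * j + 2 from by ring] using this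
  -- derivative
  have hderiv : ∀ t : ℝ, HasDerivAt g (G t) t := by
    intro t
    have h1 : HasDerivAt (fun t : ℝ => t ^ (2 * j + 2))
        ((2 * j + 2 : ℕ) * t ^ (2 * j + 1)) t := by
      have := hasDerivAt_pow (2 * j + 2) t
      simpa [show 2 * j + 2 - 1 = 2 * j + 1 by omega] using this
    have hexp : HasDerivAt φ (Real.exp (-a * t ^ (2 * j + 2)) *
        (-a * ((2 * j + 2 : ℕ) * t ^ (2 * j + 1)))) t := (h1.const_mul (-a)).exp
    have hDd : HasDerivAt D ((2 * j + 2) * a * ((2 * j + 2 : ℕ) * t ^ (2 * j + 1))) t :=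
      (h1.const_mul ((2 * j + 2) * a)).add_const m
    have hq : HasDerivAt (fun t : ℝ => t / D t)
        ((1 * D t - t * ((2 * j + 2) * a * ((2 * j + 2 : ℕ) * t ^ (2 * j + 1)))) / (D t) ^ 2) t :=
      (hasDerivAt_id t).div hDd (hDpos t).ne'
    have := hq.mul hexp
    refine this.congr_deriv ?_
    have hDne : (D t) ≠ 0 := (hDpos t).ne'
    simp only [hG, hD, hφ] at *
    push_cast
    simp only [hm] at hDne ⊢
    field_simp
    have hDne' : 2 * ((j:ℝ) + 1) * a * t ^ (2 * j + 2) + (2 * j + 1) ≠ 0 := by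
      convert hDne using 2; ring
    rw [div_sub_one (pow_ne_zero 2 hDne'), div_left_inj' (pow_ne_zero 2 hDne')]
    ring
  have hcont : Continuous g := by
    refine Continuous.mul (continuous_id.div ?_ fun t => (hDpos t).ne') ?_
    · fun_prop
    · fun_prop
  -- tendsto 0 at top
  have htend : Tendsto g atTop (nhds 0) := by
    have hupper : ∀ᶠ t in atTop, g t ≤ (2 * a)⁻¹ * t⁻¹ := by
      filter_upwards [eventually_ge_atTop (1 : ℝ)] with t ht
      have ht0 : 0 < t := by linarith
      have hpow : t ^ 2 ≤ t ^ (2 * j + 2) := pow_le_pow_right₀ ht (by omega)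
      have hDge : 2 * a * t ^ 2 ≤ D t := by
        have h2 : 2 * a * t ^ 2 ≤ 2 * a * t ^ (2 * j + 2) := by nlinarith
        have h3 : 2 * a * t ^ (2 * j + 2) ≤ (2 * j + 2) * a * t ^ (2 * j + 2) := by
          have h6 : (0:ℝ) ≤ 2 * (j:ℝ) * (a * t ^ (2 * j + 2)) := by
            have := hpownn t
            positivity
          nlinarith
        simp only [hD]
        nlinarith [hm1]
      have hφle : φ t ≤ 1 := by
        simp only [hφ]
        rw [Real.exp_le_one_iff]
        have := hpownn t
        nlinarith
      have hg1 : g t ≤ t / (2 * a * t ^ 2) := by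
        have h4 : t / D t ≤ t / (2 * a * t ^ 2) :=
          div_le_div_of_nonneg_left ht0.le (by positivity) hDge
        have h5 : 0 ≤ t / D t := div_nonneg ht0.le (hDpos t).le
        calc g t ≤ t / D t * 1 := mul_le_mul_of_nonneg_left hφle h5
          _ = t / D t := mul_one _
          _ ≤ t / (2 * a * t ^ 2) := h4
      calc g t ≤ t / (2 * a * t ^ 2) := hg1
        _ = (2 * a)⁻¹ * t⁻¹ := by field_simp
    have hlower : ∀ᶠ t in atTop, (0 : ℝ) ≤ g t := by
      filter_upwards [eventually_ge_atTop (0 : ℝ)] with t ht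
      have := Real.exp_pos (-a * t ^ (2 * j + 2))
      have := hDpos t
      positivity
    have hlim : Tendsto (fun t : ℝ => (2 * a)⁻¹ * t⁻¹) atTop (nhds 0) := by
      have := tendsto_inv_atTop_zero (𝕜 := ℝ)
      simpa using this.const_mul ((2 * a)⁻¹)
    exact tendsto_of_tendsto_of_tendsto_of_le_of_le' tendsto_const_nhds hlim hlower hupper
  -- integrability of G on Ioi x
  have hGcont : Continuous G := by
    refine Continuous.mul (by fun_prop) (Continuous.sub (Continuous.div ?_ ?_
      fun t => pow_ne_zero 2 (hDpos t).ne') continuous_const)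
    · fun_prop
    · fun_prop
  have hfrac_nonneg : ∀ t : ℝ, 0 ≤ (m + m ^ 2) / (D t) ^ 2 := by
    intro t; have := hDpos t; positivity
  have hfrac_le : ∀ t : ℝ, (m + m ^ 2) / (D t) ^ 2 ≤ (m + m ^ 2) / m ^ 2 := by
    intro t
    apply div_le_div_of_nonneg_left (by nlinarith) (by positivity)
    nlinarith [hDm t, hDpos t]
  have hGint : IntegrableOn G (Ioi x) := by
    refine Integrable.mono' (g := fun t => ((m + m ^ 2) / m ^ 2 + 1) * φ t)
      ((hφint.const_mul _).integrableOn) hGcont.aestronglyMeasurable.restrict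
      (Eventually.of_forall fun t => ?_)
    have h1 := hfrac_nonneg t
    have h2 := hfrac_le t
    have h3 : (0:ℝ) < φ t := Real.exp_pos _
    have hmsq : (0:ℝ) < m ^ 2 := by nlinarith
    have habs : |(m + m ^ 2) / (D t) ^ 2 - 1| ≤ (m + m ^ 2) / m ^ 2 + 1 :=
      abs_le.mpr ⟨by nlinarith, by nlinarith⟩
    rw [Real.norm_eq_abs, hG, abs_mul, abs_of_pos h3]
    calc φ t * |(m + m ^ 2) / (D t) ^ 2 - 1|
        ≤ φ t * ((m + m ^ 2) / m ^ 2 + 1) := mul_le_mul_of_nonneg_left habs h3.le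
      _ = ((m + m ^ 2) / m ^ 2 + 1) * φ t := mul_comm _ _
  -- FTC
  have hkey : ∫ t in Ioi x, G t = 0 - g x :=
    integral_Ioi_of_hasDerivAt_of_tendsto (hcont.continuousWithinAt)
      (fun t _ => hderiv t) hGint htend
  have hmono : ∫ t in Ioi x, (-G t) ≤ ∫ t in Ioi x, φ t := by
    refine setIntegral_mono_on hGint.neg hφint.integrableOn measurableSet_Ioi fun t ht => ?_
    have h1 := hfrac_nonneg t
    have h3 : (0:ℝ) < φ t := Real.exp_pos _
    have : -G t = φ t * (1 - (m + m ^ 2) / (D t) ^ 2) := by simp only [hG]; ring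
    rw [this]
    nlinarith
  have hgx : g x = ∫ t in Ioi x, (-G t) := by
    rw [integral_neg, hkey]; ring
  calc x / ((2 * j + 2) * a * x ^ (2 * j + 2) + (2 * j + 1)) * Real.exp (-a * x ^ (2 * j + 2))
      = g x := rfl
    _ = ∫ t in Ioi x, (-G t) := hgx
    _ ≤ ∫ t in Ioi x, φ t := hmono

/-- Lower tail bound for the density `p(x) = b exp(-a x^{2k})`:
for `x > 0`, `b · x/(2k a x^{2k} + 2k - 1) · exp(-a x^{2k}) ≤ 1 - P(x)`. -/
theorem stmt4 (k : ℕ) (hk : 1 ≤ k) (a b : ℝ) (ha : 0 < a)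
    (hb : b = (∫ t : ℝ, Real.exp (-a * t ^ (2 * k)))⁻¹)
    (x : ℝ) (hx : 0 < x) :
    b * (x / (2 * k * a * x ^ (2 * k) + 2 * k - 1)) * Real.exp (-a * x ^ (2 * k))
      ≤ 1 - ∫ t in Set.Iic x, b * Real.exp (-a * t ^ (2 * k)) := by
  set φ : ℝ → ℝ := fun t => Real.exp (-a * t ^ (2 * k)) with hφ
  have hφint : Integrable φ := aux_integrable k hk a ha
  have hIpos : 0 < ∫ t : ℝ, φ t := by
    rw [integral_pos_iff_support_of_nonneg (fun t => (Real.exp_pos _).le) hφint]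
    have : Function.support φ = Set.univ := by
      ext t; simp [hφ, (Real.exp_pos _).ne']
    rw [this]
    simp
  have hb0 : 0 < b := by rw [hb]; exact inv_pos.mpr hIpos
  have hbφint : Integrable (fun t => b * φ t) := hφint.const_mul b
  have htot : (∫ t in Set.Iic x, b * φ t) + ∫ t in Set.Ioi x, b * φ t = 1 := by
    rw [intervalIntegral.integral_Iic_add_Ioi hbφint.integrableOn hbφint.integrableOn,
      integral_const_mul, hb]
    exact inv_mul_cancel₀ hIpos.ne'
  have heq : 1 - ∫ t in Set.Iic x, b * φ t = b * ∫ t in Set.Ioi x, φ t := by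
    rw [← integral_const_mul]
    linarith
  rw [heq]
  obtain ⟨j, rfl⟩ : ∃ j, k = j + 1 := ⟨k - 1, by omega⟩
  push_cast
  have htail := aux_tail j a ha x hx
  have hconv : b * (x / (2 * (j+1) * a * x ^ (2 * (j+1)) + 2 * (j+1) - 1))
      * Real.exp (-a * x ^ (2 * (j+1)))
      = b * (x / ((2 * j + 2) * a * x ^ (2 * j + 2) + (2 * j + 1))
        * Real.exp (-a * x ^ (2 * j + 2))) := by
    rw [show 2 * (j + 1) = 2 * j + 2 by ring]
    push_cast
    ring
  calc b * (x / (2 * (j+1) * a * x ^ (2 * (j+1)) + 2 * (j+1) - 1))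
      * Real.exp (-a * x ^ (2 * (j+1)))
      = b * (x / ((2 * j + 2) * a * x ^ (2 * j + 2) + (2 * j + 1))
        * Real.exp (-a * x ^ (2 * j + 2))) := hconv
    _ ≤ b * ∫ t in Set.Ioi x, φ t := by
        apply mul_le_mul_of_nonneg_left _ hb0.le
        convert htail using 3
        · rfl
        · simp only [hφ]; ring_nf
end

section
/- Let p be a continuous strictly positive probability density on ℝ with CDF P, let h: ℝ → ℝ be measurable with ∫ |h| p < ∞, and set Ph = ∫ h p. Then the function f(x) = (1/p(x)) ∫_{-∞}^x (h(t) - Ph) p(t) dt satisfies the Stein equation f'(x) + (p'(x)/p(x)) f(x) = h(x) - Ph at every point x where p is differentiable and h is continuous. -/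
open MeasureTheory

/-- The function `f(x) = p(x)⁻¹ ∫_{-∞}^x (h(t) - Ph) p(t) dt` solves the Stein equation
`f'(x) + (p'(x)/p(x)) f(x) = h(x) - Ph` at every point where `p` is differentiable and
`h` is continuous. -/
theorem stmt6 (p p' : ℝ → ℝ) (hp : Continuous p) (hppos : ∀ x, 0 < p x)
    (hprob : ∫ x : ℝ, p x = 1)
    (h : ℝ → ℝ) (hmeas : Measurable h)
    (hint : Integrable (fun t : ℝ => |h t| * p t))
    (x : ℝ) (hderiv : HasDerivAt p (p' x) x) (hcont : ContinuousAt h x) :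
    ∃ d : ℝ,
      HasDerivAt
        (fun y : ℝ => (∫ t in Set.Iic y, (h t - ∫ s : ℝ, h s * p s) * p t) / p y) d x ∧
      d + (p' x / p x) * ((∫ t in Set.Iic x, (h t - ∫ s : ℝ, h s * p s) * p t) / p x)
        = h x - ∫ s : ℝ, h s * p s := by
  set Ph : ℝ := ∫ s : ℝ, h s * p s with hPh
  set g : ℝ → ℝ := fun t => (h t - Ph) * p t with hg
  have hpInt : Integrable p := by
    by_contra h'
    rw [integral_undef h'] at hprob
    norm_num at hprob
  have hgmeas : Measurable g := ((hmeas.sub measurable_const).mul hp.measurable)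
  have hhpInt : Integrable (fun t => h t * p t) := by
    refine Integrable.mono' hint ((hmeas.mul hp.measurable).aestronglyMeasurable) ?_
    filter_upwards with t
    rw [Real.norm_eq_abs, abs_mul, abs_of_pos (hppos t)]
  have hgInt : Integrable g := by
    have : g = fun t => h t * p t - Ph * p t := by
      funext t; simp [hg]; ring
    rw [this]
    exact hhpInt.sub (hpInt.const_mul Ph)
  set F : ℝ → ℝ := fun y => ∫ t in Set.Iic y, g t with hF
  have hgcont : ContinuousAt g x :=
    ((hcont.sub continuousAt_const).mul hp.continuousAt)
  have hFderiv : HasDerivAt F (g x) x := by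
    have h1 : HasDerivAt (fun y => (∫ t in x..y, g t) + F x) (g x) x := by
      refine HasDerivAt.add_const (F x) ?_
      exact intervalIntegral.integral_hasDerivAt_right
        hgInt.intervalIntegrable
        hgmeas.stronglyMeasurable.stronglyMeasurableAtFilter hgcont
    have h2 : (fun y => (∫ t in x..y, g t) + F x) = F := by
      funext y
      have := intervalIntegral.integral_Iic_sub_Iic (hgInt.integrableOn) (hgInt.integrableOn) (a := x) (b := y)
      simp only [hF]
      linarith [this]
    rwa [h2] at h1
  have hpx : p x ≠ 0 := (hppos x).ne'
  have hdiv : HasDerivAt (fun y => F y / p y)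
      ((g x * p x - F x * p' x) / (p x) ^ 2) x := hFderiv.div hderiv hpx
  refine ⟨_, hdiv, ?_⟩
  have : g x = (h x - Ph) * p x := rfl
  rw [this]
  field_simp
  ring
end

section
/- Let p be a continuous strictly positive probability density on ℝ with CDF P. For z ∈ ℝ, the function f_z defined by f_z(x) = (1 - P(z)) P(x)/p(x) for x ≤ z and f_z(x) = P(z)(1 - P(x))/p(x) for x ≥ z solves the equation f_z'(x) + (p'(x)/p(x)) f_z(x) = 1_{(-∞,z]}(x) - P(z) for all x ≠ z where p is differentiable. -/
open MeasureTheory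

/-- The piecewise function `f_z(x) = (1-P(z)) P(x)/p(x)` for `x ≤ z`,
`f_z(x) = P(z)(1-P(x))/p(x)` for `x ≥ z` solves the Stein equation
`f_z'(x) + (p'(x)/p(x)) f_z(x) = 1_{(-∞,z]}(x) - P(z)` for `x ≠ z` where `p` is
differentiable. -/
theorem stmt7 (p p' : ℝ → ℝ) (hp : Continuous p) (hppos : ∀ x, 0 < p x)
    (hprob : ∫ x : ℝ, p x = 1) (z : ℝ) :
    ∀ x : ℝ, x ≠ z → HasDerivAt p (p' x) x →
      ∃ d : ℝ,
        HasDerivAt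
          (fun y : ℝ =>
            if y ≤ z then (1 - ∫ t in Set.Iic z, p t) * (∫ t in Set.Iic y, p t) / p y
            else (∫ t in Set.Iic z, p t) * (1 - ∫ t in Set.Iic y, p t) / p y) d x ∧
        d + (p' x / p x) *
            (if x ≤ z then (1 - ∫ t in Set.Iic z, p t) * (∫ t in Set.Iic x, p t) / p x
             else (∫ t in Set.Iic z, p t) * (1 - ∫ t in Set.Iic x, p t) / p x)
          = (if x ≤ z then 1 else 0) - ∫ t in Set.Iic z, p t := by
  intro x hxz hp'
  have hint : Integrable p := by
    by_contra h
    rw [integral_undef h] at hprob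
    norm_num at hprob
  set P : ℝ → ℝ := fun y => ∫ t in Set.Iic y, p t with hP
  -- derivative of P at x is p x
  have hPeq : ∀ y : ℝ, P y = P x + ∫ t in x..y, p t := by
    intro y
    rw [intervalIntegral.integral_Iic_sub_Iic (hint.integrableOn) (hint.integrableOn)
      |>.symm]
    ring
  have hPd : HasDerivAt P (p x) x := by
    have h1 : HasDerivAt (fun y => ∫ t in x..y, p t) (p x) x :=
      intervalIntegral.integral_hasDerivAt_right (hint.intervalIntegrable)
        (hint.1.stronglyMeasurableAtFilter) hp.continuousAt
    have := (h1.const_add (P x))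
    exact this.congr_of_eventuallyEq (Filter.Eventually.of_forall hPeq)
  have hpx := (hppos x).ne'
  rcases lt_or_gt_of_ne hxz with hlt | hgt
  · -- x < z : branch y ≤ z
    have hd : HasDerivAt (fun y => (1 - P z) * P y / p y)
        (((1 - P z) * p x * p x - (1 - P z) * P x * p' x) / (p x) ^ 2) x := by
      exact ((hPd.const_mul (1 - P z)).div hp' hpx)
    have hev : (fun y : ℝ =>
        if y ≤ z then (1 - ∫ t in Set.Iic z, p t) * (∫ t in Set.Iic y, p t) / p y
        else (∫ t in Set.Iic z, p t) * (1 - ∫ t in Set.Iic y, p t) / p y)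
        =ᶠ[nhds x] fun y => (1 - P z) * P y / p y := by
      filter_upwards [Iio_mem_nhds hlt] with y hy
      simp [hP, (Set.mem_Iio.mp hy).le]
    refine ⟨_, hd.congr_of_eventuallyEq hev, ?_⟩
    rw [if_pos hlt.le, if_pos hlt.le]
    simp only [hP]
    field_simp
    ring
  · have hd : HasDerivAt (fun y => P z * (1 - P y) / p y)
        ((P z * -p x * p x - P z * (1 - P x) * p' x) / (p x) ^ 2) x := by
      have : HasDerivAt (fun y => P z * (1 - P y)) (P z * -p x) x :=
        ((hPd.const_sub 1).const_mul (P z))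
      exact this.div hp' hpx
    have hev : (fun y : ℝ =>
        if y ≤ z then (1 - ∫ t in Set.Iic z, p t) * (∫ t in Set.Iic y, p t) / p y
        else (∫ t in Set.Iic z, p t) * (1 - ∫ t in Set.Iic y, p t) / p y)
        =ᶠ[nhds x] fun y => P z * (1 - P y) / p y := by
      filter_upwards [Ioi_mem_nhds hgt] with y hy
      simp [hP, not_le.mpr (Set.mem_Ioi.mp hy)]
    refine ⟨_, hd.congr_of_eventuallyEq hev, ?_⟩
    rw [if_neg (not_le.mpr hgt), if_neg (not_le.mpr hgt)]
    simp only [hP]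
    field_simp
    ring
end

section
/- For k ≥ 1, a_k > 0, p(x) = b_k exp(-a_k x^{2k}) with CDF P, and z ≥ 0, the solution f_z of the Stein equation f_z'(x) - 2k a_k x^{2k-1} f_z(x) = 1_{(-∞,z]}(x) - P(z) satisfies 0 < f_z(x) ≤ 1/(2 b_k) for all x ∈ ℝ. -/
open MeasureTheory Set

/-- For `p(x) = b exp(-a x^{2k})` with CDF `P` and `z ≥ 0`, the solution
`f_z(x) = (1-P(z)) P(x) e^{a x^{2k}}/b` for `x ≤ z`, `= P(z)(1-P(x)) e^{a x^{2k}}/b`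
for `x ≥ z`, of the Stein equation satisfies `0 < f_z(x) ≤ 1/(2b)` for all `x`. -/
theorem stmt8 (k : ℕ) (hk : 1 ≤ k) (a b : ℝ) (ha : 0 < a)
    (hb : b = (∫ t : ℝ, Real.exp (-a * t ^ (2 * k)))⁻¹)
    (P : ℝ → ℝ) (hP : P = fun y => ∫ t in Set.Iic y, b * Real.exp (-a * t ^ (2 * k)))
    (z : ℝ) (hz : 0 ≤ z)
    (f : ℝ → ℝ)
    (hf : f = fun x =>
      if x ≤ z then (1 - P z) * P x * Real.exp (a * x ^ (2 * k)) / b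
      else P z * (1 - P x) * Real.exp (a * x ^ (2 * k)) / b) :
    ∀ x : ℝ, 0 < f x ∧ f x ≤ 1 / (2 * b) := by
  set g : ℝ → ℝ := fun t => Real.exp (-a * t ^ (2 * k)) with hg
  -- integrability of g
  have hgint : Integrable g := by
    have hbd : ∀ t : ℝ, ‖g t‖ ≤ Real.exp a * Real.exp (-a * t ^ 2) := by
      intro t
      rw [Real.norm_of_nonneg (Real.exp_pos _).le, ← Real.exp_add]
      apply Real.exp_le_exp.mpr
      rcases le_or_gt (t ^ 2) 1 with h | h
      · nlinarith [sq_nonneg t, pow_nonneg (sq_nonneg t) k, pow_mul t 2 k,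
          mul_pos ha (lt_of_lt_of_le (by positivity : (0:ℝ) < _) le_rfl)]
      · have h1 : t ^ 2 ≤ t ^ (2 * k) := by
          rw [pow_mul]
          exact le_self_pow₀ h.le (by omega)
        nlinarith
    have := (integrable_exp_neg_mul_sq ha).const_mul (Real.exp a)
    apply this.mono' ?_ (Filter.Eventually.of_forall hbd)
    exact (Real.continuous_exp.comp (by continuity)).aestronglyMeasurable
  have hgnn : ∀ t, 0 ≤ g t := fun t => (Real.exp_pos _).le
  have hgeven : ∀ t : ℝ, g (-t) = g t := by
    intro t; simp only [hg, Even.neg_pow (even_two_mul k)]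
  set I : ℝ := ∫ t, g t with hI
  have hIpos : 0 < I := integral_exp_pos hgint
  have hb0 : 0 < b := by rw [hb]; exact inv_pos.mpr hIpos
  have hbI : b * I = 1 := by rw [hb]; field_simp
  set Q : ℝ → ℝ := fun y => ∫ t in Iic y, g t with hQ
  have hPQ : ∀ y, P y = b * Q y := by
    intro y; rw [hP]; exact integral_const_mul b g
  -- complement
  have hcompl : ∀ y : ℝ, Q y + (∫ t in Ioi y, g t) = I :=
    fun y => intervalIntegral.integral_Iic_add_Ioi hgint.integrableOn hgint.integrableOn
  -- reflection
  have hrefl : ∀ y : ℝ, (∫ t in Ioi y, g t) = Q (-y) := by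
    intro y
    show (∫ t in Ioi y, g t) = ∫ t in Iic (-y), g t
    rw [← integral_comp_neg_Ioi]
    exact setIntegral_congr_fun measurableSet_Ioi fun t _ => (hgeven t).symm
  -- Q positive
  have hQpos : ∀ y, 0 < Q y := by
    intro y
    rw [hQ]
    rw [setIntegral_pos_iff_support_of_nonneg_ae
      (Filter.Eventually.of_forall hgnn) hgint.integrableOn]
    have : Function.support g = univ := by
      ext t; simp [hg, (Real.exp_pos _).ne']
    rw [this, univ_inter]
    simp [Real.volume_Iic]
  have hQltI : ∀ y, Q y < I := by
    intro y
    have := hcompl y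
    have h2 : 0 < ∫ t in Ioi y, g t := by rw [hrefl]; exact hQpos _
    linarith
  have hQmono : Monotone Q := by
    intro s t hst
    exact setIntegral_mono_set hgint.integrableOn
      (Filter.Eventually.of_forall hgnn) (Filter.Eventually.of_forall fun r hr => le_trans hr hst)
  -- symmetry at 0
  have hQ0 : Q 0 = I / 2 := by
    have := hcompl 0
    rw [hrefl 0, neg_zero] at this
    linarith
  -- key inequality for x ≤ 0
  have key : ∀ x : ℝ, x ≤ 0 → Real.exp (a * x ^ (2 * k)) * Q x ≤ Q 0 := by
    intro x hx
    have h1 : Real.exp (a * x ^ (2 * k)) * Q x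
        = ∫ t in Iic x, Real.exp (a * x ^ (2 * k)) * g t := (integral_const_mul _ g).symm
    have htrans : (∫ t in Iic x, g (t - x)) = Q 0 := by
      have h := (measurePreserving_sub_right (volume : Measure ℝ) x).setIntegral_preimage_emb
        (MeasurableEquiv.subRight x).measurableEmbedding g (Iic 0)
      rw [hQ]
      simpa using h
    rw [h1, ← htrans]
    apply setIntegral_mono_on
    · exact (hgint.const_mul _).integrableOn
    · exact (hgint.comp_sub_right x).integrableOn
    · exact measurableSet_Iic
    · intro t ht
      simp only [mem_Iic] at ht
      rw [hg, ← Real.exp_add, Real.exp_le_exp]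
      have hxk : x ^ (2 * k) = (-x) ^ (2 * k) := (Even.neg_pow (even_two_mul k) x).symm
      have htk : t ^ (2 * k) = (-t) ^ (2 * k) := (Even.neg_pow (even_two_mul k) t).symm
      have hsk : (t - x) ^ (2 * k) = (x - t) ^ (2 * k) := by
        rw [← neg_sub x t, Even.neg_pow (even_two_mul k)]
      have hkey : (-x) ^ (2 * k) + (x - t) ^ (2 * k) ≤ (-t) ^ (2 * k) := by
        have h := pow_add_pow_le (x := -x) (y := x - t) (n := 2 * k)
          (by linarith) (by linarith) (by omega)
        calc (-x) ^ (2*k) + (x - t) ^ (2*k) ≤ (-x + (x - t)) ^ (2*k) := h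
        _ = (-t) ^ (2*k) := by ring_nf
      nlinarith [mul_le_mul_of_nonneg_left hkey ha.le]
  -- main pointwise bounds
  have hE : ∀ x : ℝ, Real.exp (a * (-x) ^ (2 * k)) = Real.exp (a * x ^ (2 * k)) := by
    intro x; rw [Even.neg_pow (even_two_mul k)]
  have bound1 : ∀ x : ℝ, x ≤ 0 → P x * Real.exp (a * x ^ (2 * k)) ≤ 1 / 2 := by
    intro x hx
    rw [hPQ]
    have := key x hx
    have h2 : b * (Real.exp (a * x ^ (2 * k)) * Q x) ≤ b * Q 0 :=
      mul_le_mul_of_nonneg_left this hb0.le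
    rw [hQ0] at h2
    calc b * Q x * Real.exp (a * x ^ (2 * k))
        = b * (Real.exp (a * x ^ (2 * k)) * Q x) := by ring
      _ ≤ b * (I / 2) := h2
      _ = 1 / 2 := by rw [← hbI]; ring
  have bound2 : ∀ x : ℝ, 0 ≤ x → (1 - P x) * Real.exp (a * x ^ (2 * k)) ≤ 1 / 2 := by
    intro x hx
    have h1 : 1 - P x = b * Q (-x) := by
      rw [hPQ, ← hbI]
      have := hcompl x
      rw [hrefl x] at this
      ring_nf
      nlinarith [this]
    rw [h1, ← hE x]
    have := bound1 (-x) (by linarith)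
    rw [hPQ] at this
    linarith [this]
  -- positivity/boundedness of P
  have hPpos : ∀ y, 0 < P y := fun y => by rw [hPQ]; exact mul_pos hb0 (hQpos y)
  have hPlt1 : ∀ y, P y < 1 := by
    intro y
    rw [hPQ, ← hbI]
    exact (mul_lt_mul_iff_right₀ hb0).mpr (hQltI y)
  have hPmono : Monotone P := fun s t hst => by
    rw [hPQ, hPQ]; exact mul_le_mul_of_nonneg_left (hQmono hst) hb0.le
  intro x
  have hEpos : 0 < Real.exp (a * x ^ (2 * k)) := Real.exp_pos _
  rw [hf]
  by_cases hxz : x ≤ z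
  · simp only [if_pos hxz]
    constructor
    · apply div_pos _ hb0
      exact mul_pos (mul_pos (by linarith [hPlt1 z]) (hPpos x)) hEpos
    · rw [div_le_iff₀ hb0]
      have h12 : (1:ℝ) / (2 * b) * b = 1 / 2 := by field_simp
      rw [h12]
      rcases le_or_gt x 0 with hx0 | hx0
      · have h1 : P x * Real.exp (a * x ^ (2 * k)) ≤ 1 / 2 := bound1 x hx0
        have h2 : 1 - P z ≤ 1 := by linarith [hPpos z]
        nlinarith [hPpos x, hEpos, hPlt1 z, mul_nonneg (hPpos x).le hEpos.le]
      · have h1 : (1 - P x) * Real.exp (a * x ^ (2 * k)) ≤ 1 / 2 := bound2 x hx0.le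
        have h2 : 1 - P z ≤ 1 - P x := by linarith [hPmono hxz]
        have h3 : P x ≤ 1 := (hPlt1 x).le
        have h4 : (1 - P z) * Real.exp (a * x ^ (2 * k)) ≤ 1 / 2 := by
          calc (1 - P z) * Real.exp (a * x ^ (2 * k))
              ≤ (1 - P x) * Real.exp (a * x ^ (2 * k)) :=
                mul_le_mul_of_nonneg_right h2 hEpos.le
            _ ≤ 1 / 2 := h1
        nlinarith [hPpos x, mul_nonneg (sub_nonneg.mpr (hPlt1 z).le) hEpos.le]
  · simp only [if_neg hxz]
    push_neg at hxz
    have hx0 : 0 ≤ x := le_trans hz hxz.le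
    constructor
    · apply div_pos _ hb0
      exact mul_pos (mul_pos (hPpos z) (by linarith [hPlt1 x])) hEpos
    · rw [div_le_iff₀ hb0]
      have h12 : (1:ℝ) / (2 * b) * b = 1 / 2 := by field_simp
      rw [h12]
      have h1 : (1 - P x) * Real.exp (a * x ^ (2 * k)) ≤ 1 / 2 := bound2 x hx0
      have h3 : P z ≤ 1 := (hPlt1 z).le
      nlinarith [hPpos z, mul_nonneg (sub_nonneg.mpr (hPlt1 x).le) hEpos.le]
end

section
/- Let ρ be the measure ρ_a = a δ_0 + ((1-a)/2)(δ_{-1} + δ_1) on ℝ for 0 ≤ a ≤ 2/3, with cumulant generating function φ(s) = log ∫ e^{sx} dρ_a(x) = log(a + (1-a) cosh s). Then φ'''(s) ≤ 0 for all s ≥ 0. -/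
/-- GHS inequality for the three-point measure `ρ_a = a δ₀ + ((1-a)/2)(δ_{-1} + δ_1)`,
`0 ≤ a ≤ 2/3`: the cumulant generating function `φ(s) = log(a + (1-a) cosh s)` has
nonpositive third derivative on `[0,∞)`. -/
theorem stmt13 (a : ℝ) (ha0 : 0 ≤ a) (ha1 : a ≤ 2 / 3) (s : ℝ) (hs : 0 ≤ s) :
    iteratedDeriv 3 (fun t : ℝ => Real.log (a + (1 - a) * Real.cosh t)) s ≤ 0 := by
  have hb0 : (0:ℝ) < 1 - a := by linarith
  set b := 1 - a with hbdef
  have hfpos : ∀ t : ℝ, 0 < a + b * Real.cosh t := by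
    intro t
    nlinarith [Real.one_le_cosh t]
  have hf : ∀ t : ℝ, HasDerivAt (fun t => a + b * Real.cosh t) (b * Real.sinh t) t := by
    intro t
    simpa using ((Real.hasDerivAt_cosh t).const_mul b).const_add a
  have h1 : ∀ t : ℝ, HasDerivAt (fun t : ℝ => Real.log (a + b * Real.cosh t))
      (b * Real.sinh t / (a + b * Real.cosh t)) t := fun t => (hf t).log (hfpos t).ne'
  have e1 : deriv (fun t : ℝ => Real.log (a + b * Real.cosh t))
      = fun t => b * Real.sinh t / (a + b * Real.cosh t) := funext fun t => (h1 t).deriv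
  have h2 : ∀ t : ℝ, HasDerivAt (fun t => b * Real.sinh t / (a + b * Real.cosh t))
      ((b * Real.cosh t * (a + b * Real.cosh t) - b * Real.sinh t * (b * Real.sinh t))
        / (a + b * Real.cosh t) ^ 2) t := fun t =>
    ((Real.hasDerivAt_sinh t).const_mul b).div (hf t) (hfpos t).ne'
  have e2 : deriv (fun t => b * Real.sinh t / (a + b * Real.cosh t))
      = fun t => (b * Real.cosh t * (a + b * Real.cosh t) - b * Real.sinh t * (b * Real.sinh t))
        / (a + b * Real.cosh t) ^ 2 := funext fun t => (h2 t).deriv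
  have hN : ∀ t : ℝ, HasDerivAt
      (fun t => b * Real.cosh t * (a + b * Real.cosh t) - b * Real.sinh t * (b * Real.sinh t))
      (b * Real.sinh t * (a + b * Real.cosh t) + b * Real.cosh t * (b * Real.sinh t)
        - (b * Real.cosh t * (b * Real.sinh t) + b * Real.sinh t * (b * Real.cosh t))) t :=
    fun t =>
      ((((Real.hasDerivAt_cosh t).const_mul b).mul (hf t)).sub
        (((Real.hasDerivAt_sinh t).const_mul b).mul ((Real.hasDerivAt_sinh t).const_mul b)))
  have hD : ∀ t : ℝ, HasDerivAt (fun t => (a + b * Real.cosh t) ^ 2)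
      ((2 : ℕ) * (a + b * Real.cosh t) ^ (2 - 1) * (b * Real.sinh t)) t :=
    fun t => (hf t).pow 2
  have h3 : ∀ t : ℝ, HasDerivAt
      (fun t => (b * Real.cosh t * (a + b * Real.cosh t) - b * Real.sinh t * (b * Real.sinh t))
        / (a + b * Real.cosh t) ^ 2)
      (((b * Real.sinh t * (a + b * Real.cosh t) + b * Real.cosh t * (b * Real.sinh t)
        - (b * Real.cosh t * (b * Real.sinh t) + b * Real.sinh t * (b * Real.cosh t)))
          * ((a + b * Real.cosh t) ^ 2)
        - (b * Real.cosh t * (a + b * Real.cosh t) - b * Real.sinh t * (b * Real.sinh t))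
          * ((2 : ℕ) * (a + b * Real.cosh t) ^ (2 - 1) * (b * Real.sinh t)))
        / ((a + b * Real.cosh t) ^ 2) ^ 2) t :=
    fun t => (hN t).div (hD t) (pow_ne_zero 2 (hfpos t).ne')
  rw [iteratedDeriv_succ, iteratedDeriv_succ, iteratedDeriv_succ, iteratedDeriv_zero,
    e1, e2, (h3 s).deriv]
  set C := Real.cosh s with hCdef
  set H := Real.sinh s with hHdef
  have hC : 1 ≤ C := Real.one_le_cosh s
  have hH : 0 ≤ H := by
    have h0 : Real.sinh 0 ≤ Real.sinh s := Real.sinh_le_sinh.mpr hs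
    rw [Real.sinh_zero] at h0
    exact h0
  have hch : H ^ 2 = C ^ 2 - 1 := by
    have := Real.cosh_sq_sub_sinh_sq s
    rw [← hCdef, ← hHdef] at this
    nlinarith [this]
  apply div_nonpos_of_nonpos_of_nonneg
  · have fact : (b * H * (a + b * C) + b * C * (b * H) - (b * C * (b * H) + b * H * (b * C)))
          * ((a + b * C) ^ 2)
        - (b * C * (a + b * C) - b * H * (b * H))
          * ((2 : ℕ) * (a + b * C) ^ (2 - 1) * (b * H))
        = ((a + b * C) * (b * H)) * (a ^ 2 - a * b * C - 2 * b ^ 2) := by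
      push_cast
      linear_combination (2 * (a + b * C) * b ^ 3 * H) * hch
    rw [fact]
    have key : a ^ 2 - a * b * C - 2 * b ^ 2 ≤ 0 := by
      nlinarith [mul_nonneg (mul_nonneg ha0 hb0.le) (sub_nonneg.mpr hC), hbdef]
    exact mul_nonpos_of_nonneg_of_nonpos
      (mul_nonneg (hfpos s).le (mul_nonneg hb0.le hH)) key
  · positivity
end

section
/- Let ρ = (2/3) δ_0 + (1/6) δ_{-√3} + (1/6) δ_{√3} and φ(s) = log ∫ e^{sx} dρ(x). Then φ'''(s) = -6 sinh(√3 s) √3 (cosh(√3 s) - 1) / (12 cosh(√3 s) + 6 cosh(√3 s)² + cosh(√3 s)³ + 8), and in particular φ'''(s) ≤ 0 for all s ≥ 0. -/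
private lemma sq3 : Real.sqrt 3 ^ 2 = 3 := Real.sq_sqrt (by norm_num)

private lemma hpos (x : ℝ) : (0:ℝ) < 2 + Real.cosh x := by
  have := Real.cosh_pos (x := x); linarith

private lemma d1 (t : ℝ) :
    HasDerivAt (fun t : ℝ => Real.log ((2 + Real.cosh (Real.sqrt 3 * t)) / 3))
      (Real.sqrt 3 * Real.sinh (Real.sqrt 3 * t) / (2 + Real.cosh (Real.sqrt 3 * t))) t := by
  have hc := hpos (Real.sqrt 3 * t)
  have h0 : HasDerivAt (fun t : ℝ => Real.sqrt 3 * t) (Real.sqrt 3) t := by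
    simpa using (hasDerivAt_id t).const_mul (Real.sqrt 3)
  have h1 := (Real.hasDerivAt_cosh (Real.sqrt 3 * t)).comp t h0
  have h2 := (h1.const_add 2).div_const 3
  have h3 := (Real.hasDerivAt_log (by positivity)).comp t h2
  refine h3.congr_deriv ?_
  simp only [Function.comp_apply]
  field_simp

private lemma d2 (t : ℝ) :
    HasDerivAt (fun t : ℝ => Real.sqrt 3 * Real.sinh (Real.sqrt 3 * t) / (2 + Real.cosh (Real.sqrt 3 * t)))
      (3 * (2 * Real.cosh (Real.sqrt 3 * t) + 1) / (2 + Real.cosh (Real.sqrt 3 * t)) ^ 2) t := by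
  have hc := hpos (Real.sqrt 3 * t)
  have h0 : HasDerivAt (fun t : ℝ => Real.sqrt 3 * t) (Real.sqrt 3) t := by
    simpa using (hasDerivAt_id t).const_mul (Real.sqrt 3)
  have hn := ((Real.hasDerivAt_sinh (Real.sqrt 3 * t)).comp t h0).const_mul (Real.sqrt 3)
  have hd := ((Real.hasDerivAt_cosh (Real.sqrt 3 * t)).comp t h0).const_add 2
  have h := hn.div hd (by positivity)
  refine h.congr_deriv ?_
  have hid := Real.cosh_sq_sub_sinh_sq (Real.sqrt 3 * t)
  simp only [Function.comp_apply]
  field_simp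
  nlinarith [sq3, hid]

private lemma d3 (t : ℝ) :
    HasDerivAt (fun t : ℝ => 3 * (2 * Real.cosh (Real.sqrt 3 * t) + 1) / (2 + Real.cosh (Real.sqrt 3 * t)) ^ 2)
      (-6 * Real.sinh (Real.sqrt 3 * t) * Real.sqrt 3 * (Real.cosh (Real.sqrt 3 * t) - 1)
          / (12 * Real.cosh (Real.sqrt 3 * t) + 6 * Real.cosh (Real.sqrt 3 * t) ^ 2
            + Real.cosh (Real.sqrt 3 * t) ^ 3 + 8)) t := by
  have hc := hpos (Real.sqrt 3 * t)
  have h0 : HasDerivAt (fun t : ℝ => Real.sqrt 3 * t) (Real.sqrt 3) t := by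
    simpa using (hasDerivAt_id t).const_mul (Real.sqrt 3)
  have hn : HasDerivAt (fun t : ℝ => 3 * (2 * Real.cosh (Real.sqrt 3 * t) + 1))
      (3 * (2 * (Real.sinh (Real.sqrt 3 * t) * Real.sqrt 3))) t := by
    exact ((((Real.hasDerivAt_cosh (Real.sqrt 3 * t)).comp t h0).const_mul 2).add_const 1).const_mul 3
  have hd : HasDerivAt (fun t : ℝ => (2 + Real.cosh (Real.sqrt 3 * t)) ^ 2)
      (2 * (2 + Real.cosh (Real.sqrt 3 * t)) ^ 1 * (Real.sinh (Real.sqrt 3 * t) * Real.sqrt 3)) t := by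
    exact (((Real.hasDerivAt_cosh (Real.sqrt 3 * t)).comp t h0).const_add 2).pow 2
  have h := hn.div hd (by positivity)
  refine h.congr_deriv ?_
  have hden : 12 * Real.cosh (Real.sqrt 3 * t) + 6 * Real.cosh (Real.sqrt 3 * t) ^ 2
      + Real.cosh (Real.sqrt 3 * t) ^ 3 + 8 = (2 + Real.cosh (Real.sqrt 3 * t)) ^ 3 := by ring
  rw [hden]
  field_simp
  ring

/-- For `ρ = (2/3)δ₀ + (1/6)δ_{-√3} + (1/6)δ_{√3}`, the cumulant generating function
`φ(s) = log((2 + cosh(√3 s))/3)` has third derivative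
`-6 sinh(√3 s) √3 (cosh(√3 s) - 1) / (12 cosh(√3 s) + 6 cosh(√3 s)² + cosh(√3 s)³ + 8)`,
which is nonpositive for `s ≥ 0`. -/
theorem stmt14 :
    (∀ s : ℝ,
      iteratedDeriv 3 (fun t : ℝ => Real.log ((2 + Real.cosh (Real.sqrt 3 * t)) / 3)) s
        = -6 * Real.sinh (Real.sqrt 3 * s) * Real.sqrt 3 * (Real.cosh (Real.sqrt 3 * s) - 1)
          / (12 * Real.cosh (Real.sqrt 3 * s) + 6 * Real.cosh (Real.sqrt 3 * s) ^ 2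
            + Real.cosh (Real.sqrt 3 * s) ^ 3 + 8))
    ∧ ∀ s : ℝ, 0 ≤ s →
        iteratedDeriv 3 (fun t : ℝ => Real.log ((2 + Real.cosh (Real.sqrt 3 * t)) / 3)) s
          ≤ 0 := by
  have key : ∀ s : ℝ,
      iteratedDeriv 3 (fun t : ℝ => Real.log ((2 + Real.cosh (Real.sqrt 3 * t)) / 3)) s
        = -6 * Real.sinh (Real.sqrt 3 * s) * Real.sqrt 3 * (Real.cosh (Real.sqrt 3 * s) - 1)
          / (12 * Real.cosh (Real.sqrt 3 * s) + 6 * Real.cosh (Real.sqrt 3 * s) ^ 2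
            + Real.cosh (Real.sqrt 3 * s) ^ 3 + 8) := by
    intro s
    have e1 : deriv (fun t : ℝ => Real.log ((2 + Real.cosh (Real.sqrt 3 * t)) / 3))
        = fun t : ℝ => Real.sqrt 3 * Real.sinh (Real.sqrt 3 * t) / (2 + Real.cosh (Real.sqrt 3 * t)) :=
      funext fun t => (d1 t).deriv
    have e2 : deriv (fun t : ℝ => Real.sqrt 3 * Real.sinh (Real.sqrt 3 * t) / (2 + Real.cosh (Real.sqrt 3 * t)))
        = fun t : ℝ => 3 * (2 * Real.cosh (Real.sqrt 3 * t) + 1) / (2 + Real.cosh (Real.sqrt 3 * t)) ^ 2 :=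
      funext fun t => (d2 t).deriv
    rw [show (3:ℕ) = 2 + 1 from rfl, iteratedDeriv_succ, iteratedDeriv_succ, iteratedDeriv_one,
      e1, e2]
    exact (d3 s).deriv
  refine ⟨key, fun s hs => ?_⟩
  rw [key s]
  have hsinh : 0 ≤ Real.sinh (Real.sqrt 3 * s) := by rw [← Real.sinh_zero]; exact Real.sinh_le_sinh.2 (by positivity)
  have hcosh := Real.one_le_cosh (Real.sqrt 3 * s)
  have hsq3 : 0 ≤ Real.sqrt 3 := Real.sqrt_nonneg 3
  apply div_nonpos_of_nonpos_of_nonneg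
  · nlinarith [mul_nonneg (mul_nonneg hsinh hsq3) (sub_nonneg.2 hcosh)]
  · nlinarith
end
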